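/- arXiv:1003.2159 — 2 statements merged into one kernel-verified Lean document; each statement's English description precedes it below -/
import Mathlib

section
/- Under hard truncation (n P(‖H‖ > M_n) → ∞, M_n → ∞, E L² < ∞, L ≥ 0 independent of H), define U_n := B_n^{-1}[H·1(‖H‖ ≤ M_n) + (H/‖H‖)(M_n + L)·1(‖H‖ > M_n)] with B_n := [n M_n² P(‖H‖ > M_n)]^{1/2}. Then for every fixed t > 0, lim_{n→∞} n·E[‖U_n‖·1(‖U_n‖ > t)] = 0. -/
set_option maxHeartbeats 1600000


open MeasureTheory Filter

/-- Under hard truncation, the normalized truncated variables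
`U_n = B_n^{-1}[H·1(‖H‖≤M_n) + (H/‖H‖)(M_n+L)·1(‖H‖>M_n)]` satisfy
`n·E[‖U_n‖ 1(‖U_n‖ > t)] → 0` for every `t > 0`. -/
theorem hard_truncation_uniform_integrability
    {Ω : Type*} [MeasurableSpace Ω] (μ : Measure Ω) [IsProbabilityMeasure μ]
    {B : Type*} [NormedAddCommGroup B] [NormedSpace ℝ B] [CompleteSpace B]
    [SecondCountableTopology B] [MeasurableSpace B] [BorelSpace B]
    (H : Ω → B) (hH : Measurable H)
    (L : Ω → ℝ) (hL : Measurable L) (hLnonneg : ∀ ω, 0 ≤ L ω)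
    (hL2 : Integrable (fun ω => (L ω) ^ 2) μ)
    (hindep : ProbabilityTheory.IndepFun L H μ)
    (M : ℕ → ℝ) (hM : Tendsto M atTop atTop)
    (hhard : Tendsto (fun n : ℕ => (n : ℝ) * (μ {ω | M n < ‖H ω‖}).toReal)
      atTop atTop) :
    ∀ t : ℝ, 0 < t →
      Tendsto (fun n : ℕ =>
          (n : ℝ) * ∫ ω,
            (let Bn := Real.sqrt ((n : ℝ) * (M n) ^ 2 * (μ {ω' | M n < ‖H ω'‖}).toReal)
             let Un := Bn⁻¹ •
               (if ‖H ω‖ ≤ M n then H ω else ((M n + L ω) / ‖H ω‖) • H ω)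
             if t < ‖Un‖ then ‖Un‖ else 0) ∂μ)
        atTop (nhds 0) := by
  intro t ht
  have hLint : Integrable L μ := by
    refine ((integrable_const (1:ℝ)).add hL2).mono' hL.aestronglyMeasurable ?_
    filter_upwards with ω
    have h0 := hLnonneg ω
    simp only [Pi.add_apply]
    rw [Real.norm_eq_abs, abs_of_nonneg h0]
    nlinarith [sq_nonneg (L ω - 1)]
  set I1 := ∫ ω, L ω ∂μ with hI1def
  set I2 := ∫ ω, (L ω) ^ 2 ∂μ with hI2def
  have hI1 : 0 ≤ I1 := integral_nonneg hLnonneg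
  have hI2 : 0 ≤ I2 := integral_nonneg fun ω => sq_nonneg _
  have hg : Tendsto (fun n => 2 / t * (I1 / M n + I2 / (M n) ^ 2)) atTop (nhds 0) := by
    have h1 : Tendsto (fun n => I1 / M n) atTop (nhds 0) :=
      Tendsto.div_atTop tendsto_const_nhds hM
    have h2 : Tendsto (fun n => I2 / (M n) ^ 2) atTop (nhds 0) := by
      refine Tendsto.div_atTop tendsto_const_nhds ?_
      exact (hM.atTop_mul_atTop₀ hM).congr fun n => (pow_two (M n)).symm
    simpa using ((h1.add h2).const_mul (2 / t))
  refine tendsto_of_tendsto_of_tendsto_of_le_of_le' tendsto_const_nhds hg ?_ ?_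
  · filter_upwards with n
    refine mul_nonneg (Nat.cast_nonneg n) (integral_nonneg fun ω => ?_)
    simp only [Pi.zero_apply]
    split_ifs <;> positivity
  · have h1 : ∀ᶠ n : ℕ in atTop, 1 ≤ M n := hM.eventually_ge_atTop 1
    have h2 : ∀ᶠ n : ℕ in atTop,
        4 / t ^ 2 ≤ (n : ℝ) * (μ {ω | M n < ‖H ω‖}).toReal :=
      hhard.eventually_ge_atTop _
    filter_upwards [h1, h2] with n hMn hnp
    set Mn := M n with hMndef
    set pn := (μ {ω' | Mn < ‖H ω'‖}).toReal with hpndef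
    have hMn0 : (0:ℝ) < Mn := lt_of_lt_of_le one_pos hMn
    have hpn0 : 0 ≤ pn := ENNReal.toReal_nonneg
    have hnp' : 4 / t ^ 2 ≤ (n : ℝ) * pn := hnp
    have hnp0 : 0 < (n : ℝ) * pn := lt_of_lt_of_le (by positivity) hnp'
    set s := Real.sqrt ((n : ℝ) * pn) with hsdef
    have hs2 : s ^ 2 = (n : ℝ) * pn := Real.sq_sqrt hnp0.le
    have hs0 : 0 < s := Real.sqrt_pos.mpr hnp0
    have h4 : 4 ≤ s ^ 2 * t ^ 2 := by
      rw [hs2]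
      rw [div_le_iff₀ (by positivity)] at hnp'
      linarith
    have hst : 2 ≤ s * t := by
      nlinarith [mul_nonneg hs0.le ht.le]
    have hBn : Real.sqrt ((n : ℝ) * Mn ^ 2 * pn) = Mn * s := by
      rw [show (n : ℝ) * Mn ^ 2 * pn = Mn ^ 2 * ((n : ℝ) * pn) by ring,
        Real.sqrt_mul (sq_nonneg Mn), Real.sqrt_sq hMn0.le]
    have hB0 : 0 < Mn * s := mul_pos hMn0 hs0
    set a := Mn * s * t - Mn with hadef
    have ha_pos : 0 < a := by nlinarith
    have ha_ge : Mn * (Mn * s * t / 2) ≤ Mn * a := by nlinarith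
    set ψ : Ω → ℝ := fun ω =>
      (if Mn < ‖H ω‖ then (1:ℝ) else 0) * ((Mn + L ω) * L ω) with hψdef
    have hψ0 : ∀ ω, 0 ≤ ψ ω := by
      intro ω
      have hl := hLnonneg ω
      simp only [hψdef]
      split_ifs
      · rw [one_mul]
        exact mul_nonneg (by linarith) hl
      · rw [zero_mul]
    have hψle : ∀ ω, ψ ω ≤ Mn * L ω + (L ω) ^ 2 := by
      intro ω
      have hl := hLnonneg ω
      simp only [hψdef]
      split_ifs
      · rw [one_mul]
        exact le_of_eq (by ring)
      · rw [zero_mul]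
        have : 0 ≤ Mn * L ω := mul_nonneg hMn0.le hl
        nlinarith [sq_nonneg (L ω)]
    have hψmeas : Measurable ψ := by
      apply Measurable.mul
      · exact Measurable.ite (measurableSet_lt measurable_const hH.norm)
          measurable_const measurable_const
      · exact ((measurable_const.add hL).mul hL)
    have hψint : Integrable ψ μ := by
      refine ((hLint.const_mul Mn).add hL2).mono' hψmeas.aestronglyMeasurable ?_
      filter_upwards with ω
      rw [Real.norm_eq_abs, abs_of_nonneg (hψ0 ω)]
      exact hψle ω
    have hψInt : ∫ ω, ψ ω ∂μ = pn * (Mn * I1 + I2) := by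
      have hgm : Measurable fun y : B => if Mn < ‖y‖ then (1:ℝ) else 0 :=
        Measurable.ite (measurableSet_lt measurable_const measurable_norm)
          measurable_const measurable_const
      have hfm : Measurable fun x : ℝ => (Mn + x) * x :=
        (measurable_const.add measurable_id).mul measurable_id
      have hindep' : ProbabilityTheory.IndepFun
          ((fun y : B => if Mn < ‖y‖ then (1:ℝ) else 0) ∘ H)
          ((fun x : ℝ => (Mn + x) * x) ∘ L) μ :=
        hindep.symm.comp hgm hfm
      have hmul := hindep'.integral_fun_mul_eq_mul_integral
        (hgm.comp hH).aestronglyMeasurable (hfm.comp hL).aestronglyMeasurable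
      have e1 : (∫ ω, (if Mn < ‖H ω‖ then (1:ℝ) else 0) ∂μ) = pn := by
        have hset : MeasurableSet {ω | Mn < ‖H ω‖} :=
          measurableSet_lt measurable_const hH.norm
        have : (fun ω => if Mn < ‖H ω‖ then (1:ℝ) else 0) =
            Set.indicator {ω | Mn < ‖H ω‖} (1 : Ω → ℝ) := by
          ext ω
          simp [Set.indicator_apply, Set.mem_setOf_eq]
        rw [this, integral_indicator_one hset]
        rfl
      have e2 : (∫ ω, (Mn + L ω) * L ω ∂μ) = Mn * I1 + I2 := by
        have : (fun ω => (Mn + L ω) * L ω) = fun ω => Mn * L ω + (L ω) ^ 2 := by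
          funext ω; ring
        rw [this, integral_add (hLint.const_mul Mn) hL2, integral_const_mul, ← hI1def, ← hI2def]
      calc ∫ ω, ψ ω ∂μ
          = ∫ ω, ((fun y : B => if Mn < ‖y‖ then (1:ℝ) else 0) ∘ H) ω *
              ((fun x : ℝ => (Mn + x) * x) ∘ L) ω ∂μ := by
            simp only [hψdef, Function.comp]
        _ = (∫ ω, (if Mn < ‖H ω‖ then (1:ℝ) else 0) ∂μ) *
              (∫ ω, (Mn + L ω) * L ω ∂μ) := hmul
        _ = pn * (Mn * I1 + I2) := by rw [e1, e2]
    rw [hBn]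
    have hptle : ∀ ω,
        (let Un := (Mn * s)⁻¹ • (if ‖H ω‖ ≤ Mn then H ω else ((Mn + L ω) / ‖H ω‖) • H ω)
         if t < ‖Un‖ then ‖Un‖ else 0) ≤ (Mn * s)⁻¹ * a⁻¹ * ψ ω := by
      intro ω
      have hrhs0 : 0 ≤ (Mn * s)⁻¹ * a⁻¹ * ψ ω := by
        have := hψ0 ω
        positivity
      by_cases hle : ‖H ω‖ ≤ Mn
      · simp only [if_pos hle]
        rw [if_neg]
        · exact hrhs0
        · push_neg
          have hn : ‖(Mn * s)⁻¹ • H ω‖ = (Mn * s)⁻¹ * ‖H ω‖ := by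
            rw [norm_smul, Real.norm_eq_abs, abs_of_nonneg (by positivity)]
          rw [hn]
          have h1 : (Mn * s)⁻¹ * ‖H ω‖ ≤ (Mn * s)⁻¹ * Mn :=
            mul_le_mul_of_nonneg_left hle (by positivity)
          have h2 : (Mn * s)⁻¹ * Mn = s⁻¹ := by field_simp
          have h3 : s⁻¹ < t := by
            rw [inv_eq_one_div, div_lt_iff₀ hs0]
            nlinarith
          linarith [h1, h2 ▸ h1]
      · push_neg at hle
        have hHne : ‖H ω‖ ≠ 0 := (lt_trans hMn0 hle).ne'
        have hML : 0 ≤ Mn + L ω := by have := hLnonneg ω; linarith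
        have hn : ‖(Mn * s)⁻¹ • ((Mn + L ω) / ‖H ω‖) • H ω‖ =
            (Mn * s)⁻¹ * (Mn + L ω) := by
          rw [norm_smul, norm_smul, Real.norm_eq_abs, Real.norm_eq_abs,
            abs_of_nonneg (by positivity : (0:ℝ) ≤ (Mn * s)⁻¹),
            abs_of_nonneg (by positivity : (0:ℝ) ≤ (Mn + L ω) / ‖H ω‖)]
          rw [div_mul_cancel₀ _ hHne]
        simp only [if_neg (not_le.mpr hle), hn]
        split_ifs with h
        · -- t < (Mn*s)⁻¹ * (Mn + L ω)
          have h2 : Mn * s * t < Mn + L ω := by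
            have h3 := mul_lt_mul_of_pos_left h hB0
            rwa [mul_inv_cancel_left₀ hB0.ne'] at h3
          have hLa : a ≤ L ω := by rw [hadef]; linarith
          have hψval : ψ ω = (Mn + L ω) * L ω := by
            simp only [hψdef, if_pos hle, one_mul]
          rw [hψval]
          have key : a * (Mn + L ω) ≤ (Mn + L ω) * L ω := by nlinarith
          calc (Mn * s)⁻¹ * (Mn + L ω)
              = (Mn * s)⁻¹ * a⁻¹ * (a * (Mn + L ω)) := by
                field_simp [ha_pos.ne']
            _ ≤ (Mn * s)⁻¹ * a⁻¹ * ((Mn + L ω) * L ω) :=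
                mul_le_mul_of_nonneg_left key (by positivity)
        · exact hrhs0
    have hintle : (∫ ω,
        (let Un := (Mn * s)⁻¹ • (if ‖H ω‖ ≤ Mn then H ω else ((Mn + L ω) / ‖H ω‖) • H ω)
         if t < ‖Un‖ then ‖Un‖ else 0) ∂μ) ≤ (Mn * s)⁻¹ * a⁻¹ * (pn * (Mn * I1 + I2)) := by
      have : (∫ ω, (Mn * s)⁻¹ * a⁻¹ * ψ ω ∂μ) =
          (Mn * s)⁻¹ * a⁻¹ * (pn * (Mn * I1 + I2)) := by
        rw [integral_const_mul, hψInt]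
      rw [← this]
      refine integral_mono_of_nonneg ?_ (hψint.const_mul _) ?_
      · filter_upwards with ω
        simp only [Pi.zero_apply]
        split_ifs <;> positivity
      · filter_upwards with ω
        exact hptle ω
    have hS : 0 ≤ Mn * I1 + I2 := by positivity
    calc (n : ℝ) * ∫ ω,
          (let Un := (Mn * s)⁻¹ • (if ‖H ω‖ ≤ Mn then H ω else ((Mn + L ω) / ‖H ω‖) • H ω)
           if t < ‖Un‖ then ‖Un‖ else 0) ∂μ
        ≤ (n : ℝ) * ((Mn * s)⁻¹ * a⁻¹ * (pn * (Mn * I1 + I2))) :=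
          mul_le_mul_of_nonneg_left hintle (Nat.cast_nonneg n)
      _ = s * (Mn * I1 + I2) / (Mn * a) := by
          field_simp
          linear_combination (-(Mn * I1 + I2)) * hs2
      _ ≤ s * (Mn * I1 + I2) / (Mn * (Mn * s * t / 2)) := by
          apply div_le_div_of_nonneg_left (by positivity) (by positivity) ha_ge
      _ = 2 / t * (I1 / Mn + I2 / Mn ^ 2) := by
          field_simp
end

section
/- Fix p ∈ (1,2), K > 0, and set a_j := K(log(max(j,2)))^{(1−p)/2} and X := Σ_j a_j ε_j e_j with (ε_j) i.i.d. Rademacher, a c_0-valued bounded symmetric random variable. Then with X_1, X_2, … i.i.d. copies of X, n^{-1/p} Σ_{i=1}^n X_i does not converge to 0 in probability; specifically, lim sup_n Π_{j=1}^∞ P(|Σ_{k=1}^n ε_k| ≤ n^{1/p} a_j^{-1}) < 1. -/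
open MeasureTheory Filter

lemma myAntitoneProd {f : ℕ → ℝ} (h0 : ∀ j, 0 ≤ f j) (h1 : ∀ j, f j ≤ 1) :
    Antitone (fun s : Finset ℕ => ∏ j ∈ s, f j) := by
  intro s t hst
  simp only
  rw [← Finset.prod_sdiff hst]
  have h2 : ∏ j ∈ t \ s, f j ≤ 1 := Finset.prod_le_one (fun i _ => h0 i) (fun i _ => h1 i)
  have h3 : 0 ≤ ∏ j ∈ s, f j := Finset.prod_nonneg (fun i _ => h0 i)
  nlinarith [Finset.prod_nonneg (fun i (_ : i ∈ t \ s) => h0 i)]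

lemma myTprodLe {f : ℕ → ℝ} (h0 : ∀ j, 0 ≤ f j) (h1 : ∀ j, f j ≤ 1) (s : Finset ℕ) :
    ∏' j, f j ≤ ∏ j ∈ s, f j := by
  have hb : BddBelow (Set.range fun s : Finset ℕ => ∏ j ∈ s, f j) := by
    refine ⟨0, ?_⟩
    rintro x ⟨t, rfl⟩
    exact Finset.prod_nonneg (fun i _ => h0 i)
  have hp : HasProd f (⨅ s : Finset ℕ, ∏ j ∈ s, f j) :=
    tendsto_atTop_ciInf (myAntitoneProd h0 h1) hb
  rw [hp.tprod_eq]
  exact ciInf_le hb s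

lemma myTprodNonneg {f : ℕ → ℝ} (h0 : ∀ j, 0 ≤ f j) : 0 ≤ ∏' j, f j := by
  by_cases h : Multipliable f
  · obtain ⟨x, hx⟩ := h
    rw [hx.tprod_eq]
    exact ge_of_tendsto hx (Filter.Eventually.of_forall fun s =>
      Finset.prod_nonneg fun i _ => h0 i)
  · rw [tprod_eq_one_of_not_multipliable h]; norm_num

set_option maxHeartbeats 2000000 in
/-- Example 2 of the paper: with `a_j = K (log (max j 2))^{(1-p)/2}` for `p ∈ (1,2)` and
`K` the constant of the Rademacher lower-tail bound, the infinite products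
`Π_j P(|Σ_{k<n} ε_k| ≤ n^{1/p} a_j^{-1})` have limsup `< 1`; hence
`n^{-1/p} Σ_{i≤n} X_i` does not converge to `0` in probability. -/
theorem example2_no_lln_rate
    {Ω : Type*} [MeasurableSpace Ω] (μ : Measure Ω) [IsProbabilityMeasure μ]
    (p : ℝ) (hp1 : 1 < p) (hp2 : p < 2)
    (ε : ℕ → Ω → ℝ) (hmeas : ∀ i, Measurable (ε i))
    (hindep : ProbabilityTheory.iIndepFun ε μ)
    (hrad : ∀ i, μ {ω | ε i ω = 1} = ENNReal.ofReal (1/2) ∧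
                 μ {ω | ε i ω = -1} = ENNReal.ofReal (1/2))
    (K : ℝ) (hK : 0 < K)
    (hlower : ∀ n : ℕ, 1 ≤ n → ∀ t : ℝ,
      K * Real.sqrt n ≤ t → t ≤ (n : ℝ) / K →
      Real.exp (-K * t ^ 2 / n) ≤ (μ {ω | t < ∑ i ∈ Finset.range n, ε i ω}).toReal)
    (a : ℕ → ℝ) (ha : ∀ j, a j = K * (Real.log (max (j : ℝ) 2)) ^ ((1 - p) / 2)) :
    Filter.limsup (fun n : ℕ =>
        ∏' j : ℕ,
          (μ {ω | |∑ k ∈ Finset.range n, ε k ω| ≤ (n : ℝ) ^ (1 / p) * (a j)⁻¹}).toReal)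
      atTop < 1 := by
  classical
  have hp0 : (0:ℝ) < p := by linarith
  have hlog2 : (0:ℝ) < Real.log 2 := Real.log_pos one_lt_two
  have hfac0 : ∀ n j : ℕ,
      0 ≤ (μ {ω | |∑ k ∈ Finset.range n, ε k ω| ≤ (n : ℝ) ^ (1 / p) * (a j)⁻¹}).toReal :=
    fun n j => ENNReal.toReal_nonneg
  have hfac1 : ∀ n j : ℕ,
      (μ {ω | |∑ k ∈ Finset.range n, ε k ω| ≤ (n : ℝ) ^ (1 / p) * (a j)⁻¹}).toReal ≤ 1 := by
    intro n j
    calc (μ {ω | |∑ k ∈ Finset.range n, ε k ω| ≤ (n : ℝ) ^ (1 / p) * (a j)⁻¹}).toReal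
        ≤ (μ Set.univ).toReal :=
          ENNReal.toReal_mono (measure_ne_top μ _) (measure_mono (Set.subset_univ _))
      _ = 1 := by simp
  -- eventual hypotheses
  have hq1 : (0:ℝ) < 1/p - 1/2 := by
    have : (1:ℝ)/2 < 1/p := by
      rw [div_lt_div_iff₀ (by norm_num) hp0]; linarith
    linarith
  have hq2 : (0:ℝ) < 2/p - 1 := by
    have : (1:ℝ) < 2/p := by
      rw [lt_div_iff₀ hp0]; linarith
    linarith
  have hev1 : ∀ᶠ n : ℕ in atTop,
      K^2 * (Real.log 2) ^ ((1-p)/2) ≤ (n:ℝ) ^ (1/p - 1/2) :=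
    ((tendsto_rpow_atTop hq1).comp tendsto_natCast_atTop_atTop).eventually_ge_atTop _
  have hev2 : ∀ᶠ n : ℕ in atTop, 1/K + 1 ≤ (n:ℝ) ^ (2/p - 1) :=
    ((tendsto_rpow_atTop hq2).comp tendsto_natCast_atTop_atTop).eventually_ge_atTop _
  have key : ∀ᶠ n : ℕ in atTop,
      (∏' j : ℕ,
        (μ {ω | |∑ k ∈ Finset.range n, ε k ω| ≤ (n : ℝ) ^ (1 / p) * (a j)⁻¹}).toReal)
        ≤ Real.exp (-1) := by
    filter_upwards [eventually_ge_atTop 1, hev1, hev2] with n hn1 h1 h2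
    have hn0 : (0:ℝ) < (n:ℝ) := by exact_mod_cast Nat.lt_of_lt_of_le Nat.zero_lt_one hn1
    have hn1' : (1:ℝ) ≤ (n:ℝ) := by exact_mod_cast hn1
    set l : ℕ := ⌊Real.exp ((n:ℝ) ^ (2/p))⌋₊ with hl
    have hnq1 : (1:ℝ) ≤ (n:ℝ) ^ (2/p) := by
      calc (1:ℝ) = (1:ℝ) ^ (2/p) := (Real.one_rpow _).symm
        _ ≤ (n:ℝ) ^ (2/p) := Real.rpow_le_rpow zero_le_one hn1' (by positivity)
    have hl1 : 1 ≤ l := Nat.le_floor (by simpa using Real.one_le_exp (by linarith))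
    have hl0 : (0:ℝ) < (l:ℝ) := by exact_mod_cast hl1
    have hc : (n:ℝ)/K + 1 ≤ (n:ℝ) ^ (2/p) := by
      have hsplit : (n:ℝ) ^ (2/p) = (n:ℝ) * (n:ℝ) ^ (2/p - 1) := by
        nth_rewrite 2 [← Real.rpow_one (n:ℝ)]
        rw [← Real.rpow_add hn0]
        congr 1; ring
      have h3 : (n:ℝ) * (1/K + 1) ≤ (n:ℝ) * (n:ℝ) ^ (2/p - 1) :=
        mul_le_mul_of_nonneg_left h2 hn0.le
      have h4 : (n:ℝ)/K + (n:ℝ) = (n:ℝ) * (1/K + 1) := by ring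
      rw [hsplit]
      linarith
    have hlK : Real.exp ((n:ℝ)/K) ≤ (l:ℝ) := by
      have h1' : Real.exp ((n:ℝ) ^ (2/p)) - 1 < (l:ℝ) := Nat.sub_one_lt_floor _
      have h2' : Real.exp ((n:ℝ)/K + 1) ≤ Real.exp ((n:ℝ) ^ (2/p)) := Real.exp_le_exp.mpr hc
      have h3' : Real.exp ((n:ℝ)/K) + 1 ≤ Real.exp ((n:ℝ)/K + 1) := by
        rw [Real.exp_add]
        have e1 : (1:ℝ) ≤ Real.exp ((n:ℝ)/K) := Real.one_le_exp (by positivity)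
        have e2 : (2:ℝ) ≤ Real.exp 1 := by
          have := Real.exp_one_gt_d9; linarith
        have e3 : Real.exp ((n:ℝ)/K) * 2 ≤ Real.exp ((n:ℝ)/K) * Real.exp 1 :=
          mul_le_mul_of_nonneg_left e2 (Real.exp_pos _).le
        linarith
      linarith
    have hfactor : ∀ j : ℕ, j < l →
        (μ {ω | |∑ k ∈ Finset.range n, ε k ω| ≤ (n : ℝ) ^ (1 / p) * (a j)⁻¹}).toReal
          ≤ Real.exp (-(1/(l:ℝ))) := by
      intro j hj
      set L : ℝ := Real.log (max (j:ℝ) 2) with hLdef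
      have hL2 : Real.log 2 ≤ L := Real.log_le_log (by norm_num) (le_max_right _ _)
      have hLpos : (0:ℝ) < L := lt_of_lt_of_le hlog2 hL2
      set t : ℝ := (n : ℝ) ^ (1 / p) * (a j)⁻¹ with htdef
      have hexpinv : (L ^ ((1-p)/2))⁻¹ = L ^ ((p-1)/2) := by
        rw [← Real.rpow_neg hLpos.le]; congr 1; ring
      have htval : t = (n:ℝ) ^ (1/p) * L ^ ((p-1)/2) / K := by
        rw [htdef, ha j, mul_inv, ← hLdef, hexpinv]; ring
      -- lower bound on t
      have hcc : (Real.log 2) ^ ((p-1)/2) * (Real.log 2) ^ ((1-p)/2) = 1 := by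
        rw [← Real.rpow_add hlog2]
        have : (p-1)/2 + (1-p)/2 = 0 := by ring
        rw [this, Real.rpow_zero]
      have husplit : (n:ℝ) ^ (1/p) = (n:ℝ) ^ ((1:ℝ)/2) * (n:ℝ) ^ (1/p - 1/2) := by
        rw [← Real.rpow_add hn0]; congr 1; ring
      have hLc : (Real.log 2) ^ ((p-1)/2) ≤ L ^ ((p-1)/2) :=
        Real.rpow_le_rpow hlog2.le hL2 (by linarith)
      have hcpos : (0:ℝ) < (Real.log 2) ^ ((p-1)/2) := Real.rpow_pos_of_pos hlog2 _
      have hc'pos : (0:ℝ) < (Real.log 2) ^ ((1-p)/2) := Real.rpow_pos_of_pos hlog2 _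
      have hvpos : (0:ℝ) < (n:ℝ) ^ ((1:ℝ)/2) := Real.rpow_pos_of_pos hn0 _
      have hwpos : (0:ℝ) < (n:ℝ) ^ (1/p - 1/2) := Real.rpow_pos_of_pos hn0 _
      have hKK : K^2 ≤ (n:ℝ) ^ (1/p - 1/2) * L ^ ((p-1)/2) := by
        calc K^2 = (K^2 * (Real.log 2) ^ ((1-p)/2)) * (Real.log 2) ^ ((p-1)/2) := by
              rw [show (K^2 * (Real.log 2) ^ ((1-p)/2)) * (Real.log 2) ^ ((p-1)/2)
                    = K^2 * ((Real.log 2) ^ ((p-1)/2) * (Real.log 2) ^ ((1-p)/2)) by ring, hcc,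
                  mul_one]
          _ ≤ (n:ℝ) ^ (1/p - 1/2) * L ^ ((p-1)/2) :=
              mul_le_mul h1 hLc hcpos.le (le_trans (by positivity) h1)
      have htlow : K * Real.sqrt (n:ℝ) ≤ t := by
        rw [Real.sqrt_eq_rpow, htval, husplit, le_div_iff₀ hK]
        calc K * (n:ℝ) ^ ((1:ℝ)/2) * K = (n:ℝ) ^ ((1:ℝ)/2) * K^2 := by ring
          _ ≤ (n:ℝ) ^ ((1:ℝ)/2) * ((n:ℝ) ^ (1/p - 1/2) * L ^ ((p-1)/2)) :=
              mul_le_mul_of_nonneg_left hKK hvpos.le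
          _ = (n:ℝ) ^ ((1:ℝ)/2) * (n:ℝ) ^ (1/p - 1/2) * L ^ ((p-1)/2) := by ring
      have ht0 : (0:ℝ) ≤ t := le_trans (by positivity) htlow
      -- upper bound on t
      have hjle : (j:ℝ) ≤ Real.exp ((n:ℝ) ^ (2/p)) := by
        have hj' : (j:ℝ) < (l:ℝ) := by exact_mod_cast hj
        have hfl : (l:ℝ) ≤ Real.exp ((n:ℝ) ^ (2/p)) := Nat.floor_le (Real.exp_pos _).le
        linarith
      have h2le : (2:ℝ) ≤ Real.exp ((n:ℝ) ^ (2/p)) := by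
        have := Real.add_one_le_exp ((n:ℝ) ^ (2/p))
        linarith
      have hLle : L ≤ (n:ℝ) ^ (2/p) := by
        rw [hLdef, Real.log_le_iff_le_exp (by positivity)]
        exact max_le hjle h2le
      have hLpow : L ^ ((p-1)/2) ≤ ((n:ℝ) ^ (2/p)) ^ ((p-1)/2) :=
        Real.rpow_le_rpow hLpos.le hLle (by linarith)
      have hnpow : ((n:ℝ) ^ (2/p)) ^ ((p-1)/2) = (n:ℝ) ^ ((p-1)/p) := by
        rw [← Real.rpow_mul hn0.le]; congr 1; field_simp
      have hmul : (n:ℝ) ^ (1/p) * (n:ℝ) ^ ((p-1)/p) = (n:ℝ) := by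
        rw [← Real.rpow_add hn0]
        have : 1/p + (p-1)/p = 1 := by field_simp; ring
        rw [this, Real.rpow_one]
      have htup : t ≤ (n:ℝ)/K := by
        rw [htval]
        gcongr
        calc (n:ℝ) ^ (1/p) * L ^ ((p-1)/2)
            ≤ (n:ℝ) ^ (1/p) * (n:ℝ) ^ ((p-1)/p) := by
              apply mul_le_mul_of_nonneg_left (hLpow.trans_eq hnpow) (by positivity)
          _ = (n:ℝ) := hmul
      -- exponential bound
      have hKtn : t * K ≤ (n:ℝ) := (le_div_iff₀ hK).mp htup
      have hKt : K * t^2 / (n:ℝ) ≤ (n:ℝ)/K := by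
        rw [div_le_div_iff₀ hn0 hK]
        have h5 : t * K * (t * K) ≤ (n:ℝ) * (n:ℝ) :=
          mul_le_mul hKtn hKtn (by positivity) hn0.le
        calc K * t^2 * K = t * K * (t * K) := by ring
          _ ≤ (n:ℝ) * (n:ℝ) := h5
      have hexp1 : Real.exp (-((n:ℝ)/K)) ≤ Real.exp (-K * t^2 / (n:ℝ)) := by
        apply Real.exp_le_exp.mpr
        have : -K * t^2 / (n:ℝ) = -(K * t^2 / (n:ℝ)) := by ring
        rw [this]
        linarith
      have hexp2 : 1/(l:ℝ) ≤ Real.exp (-((n:ℝ)/K)) := by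
        rw [Real.exp_neg, inv_eq_one_div]
        exact one_div_le_one_div_of_le (Real.exp_pos _) hlK
      have hBmeas : MeasurableSet {ω | t < ∑ k ∈ Finset.range n, ε k ω} :=
        measurableSet_lt measurable_const (Finset.measurable_sum _ (fun i _ => hmeas i))
      have hsub : {ω | |∑ k ∈ Finset.range n, ε k ω| ≤ t}
          ⊆ {ω | t < ∑ k ∈ Finset.range n, ε k ω}ᶜ := by
        intro ω hω
        simp only [Set.mem_compl_iff, Set.mem_setOf_eq, not_lt] at *
        exact le_trans (le_abs_self _) hω
      have hμ : (μ {ω | |∑ k ∈ Finset.range n, ε k ω| ≤ t}).toReal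
          ≤ 1 - (μ {ω | t < ∑ k ∈ Finset.range n, ε k ω}).toReal := by
        have hm1 : μ {ω | |∑ k ∈ Finset.range n, ε k ω| ≤ t}
            ≤ 1 - μ {ω | t < ∑ k ∈ Finset.range n, ε k ω} := by
          rw [← prob_compl_eq_one_sub hBmeas]
          exact measure_mono hsub
        have hfin : (1 : ENNReal) - μ {ω | t < ∑ k ∈ Finset.range n, ε k ω} ≠ ⊤ :=
          ne_top_of_le_ne_top ENNReal.one_ne_top tsub_le_self
        have hm2 := ENNReal.toReal_mono hfin hm1
        rwa [ENNReal.toReal_sub_of_le prob_le_one ENNReal.one_ne_top, ENNReal.toReal_one] at hm2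
      have hlow := hlower n hn1 t htlow htup
      calc (μ {ω | |∑ k ∈ Finset.range n, ε k ω| ≤ (n : ℝ) ^ (1 / p) * (a j)⁻¹}).toReal
          = (μ {ω | |∑ k ∈ Finset.range n, ε k ω| ≤ t}).toReal := by rw [htdef]
        _ ≤ 1 - (μ {ω | t < ∑ k ∈ Finset.range n, ε k ω}).toReal := hμ
        _ ≤ 1 - Real.exp (-K * t^2 / (n:ℝ)) := by linarith
        _ ≤ 1 - 1/(l:ℝ) := by linarith
        _ ≤ Real.exp (-(1/(l:ℝ))) := by linarith [Real.add_one_le_exp (-(1/(l:ℝ)))]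
    calc (∏' j : ℕ,
          (μ {ω | |∑ k ∈ Finset.range n, ε k ω| ≤ (n : ℝ) ^ (1 / p) * (a j)⁻¹}).toReal)
        ≤ ∏ j ∈ Finset.range l,
            (μ {ω | |∑ k ∈ Finset.range n, ε k ω| ≤ (n : ℝ) ^ (1 / p) * (a j)⁻¹}).toReal :=
          myTprodLe (hfac0 n) (hfac1 n) _
      _ ≤ ∏ j ∈ Finset.range l, Real.exp (-(1/(l:ℝ))) :=
          Finset.prod_le_prod (fun j _ => hfac0 n j)
            (fun j hj => hfactor j (Finset.mem_range.mp hj))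
      _ = Real.exp (-(1/(l:ℝ))) ^ l := by
          rw [Finset.prod_const, Finset.card_range]
      _ = Real.exp (-1) := by
          rw [← Real.exp_nat_mul]
          congr 1
          field_simp
  -- conclude
  have hcob : IsCoboundedUnder (· ≤ ·) atTop (fun n : ℕ =>
      ∏' j : ℕ,
        (μ {ω | |∑ k ∈ Finset.range n, ε k ω| ≤ (n : ℝ) ^ (1 / p) * (a j)⁻¹}).toReal) :=
    Filter.isCoboundedUnder_le_of_le atTop (fun n => myTprodNonneg (hfac0 n))
  refine lt_of_le_of_lt (Filter.limsup_le_of_le hcob key) ?_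
  rw [← Real.exp_zero]
  exact Real.exp_lt_exp.mpr (by norm_num)
end
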